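/- The Strichartz hexacarpet K = Σ/∼ (with the quotient topology) is not homeomorphic to a closed 2-simplex in the plane, i.e., there is no homeomorphism from K onto the convex hull of three affinely independent points of ℝ². -/

import Mathlib

open Classical
open Metric

/-- The space `Σ` of infinite words over the alphabet `X = {0,1,2,3,4,5} = ℤ/6`
(indexed from `0`: the letter `w₁` of the paper is `w 0`). -/
abbrev Word := ℕ → ZMod 6

/-- The metric `δ_r` on a word space: `δ_r(w,v) = r^ℓ` where `ℓ ≥ 1` is the first
(1-indexed) position at which `w` and `v` differ, and `δ_r(w,w) = 0`. -/
noncomputable def wordDist {X : Type*} (r : ℝ) (w v : ℕ → X) : ℝ :=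
  if h : w = v then 0
  else r ^ (Nat.find (Function.ne_iff.mp h) + 1)

/-- Prepending a letter to an infinite word: `σ_i(w) = iw`. -/
def prepend {X : Type*} (i : X) (w : ℕ → X) : ℕ → X
  | 0 => i
  | n + 1 => w n

/-- `α_k = u₁ + ⋯ + u_k` in `ℤ/6` (the sum of the first `k` letters of `u`). -/
def alphaSum (u : Word) (k : ℕ) : ZMod 6 := ∑ j ∈ Finset.range k, u j

/-- The map `f : Σ → Σ`, `f(u) = v` with `v₁ = u₁` and
`v_m = (−1)^{α_{m−1}} u_m + α_{m−1}` (mod 6); here `(−1)^α` is `+1` when `α ∈ ℤ/6` is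
even and `−1` when `α` is odd.  (In 0-indexed form, position `m` corresponds to index
`m−1`, and `α_0 = 0` is even, so the case `v₁ = u₁` is subsumed.) -/
noncomputable def fMap (u : Word) : Word := fun n =>
  (if Even (alphaSum u n) then u n else -(u n)) + alphaSum u n

/-- The generating relation of `∼`: `u` and `w` are of the forms `x i α v` and
`x j α v`, where `x` is a finite word (of length `ℓ`, occupying indices `< ℓ`),
`j = i + 1` (mod 6), `α ∈ {3,4}` if `i` is odd and `α ∈ {1,2}` if `i` is even, and
`v ∈ {0,5}^ℕ`. -/
def Tilde (u w : Word) : Prop :=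
  ∃ ℓ : ℕ, (∀ m < ℓ, u m = w m) ∧ w ℓ = u ℓ + 1 ∧ (∀ m > ℓ, u m = w m) ∧
    ((¬ Even (u ℓ) ∧ (u (ℓ + 1) = 3 ∨ u (ℓ + 1) = 4)) ∨
      (Even (u ℓ) ∧ (u (ℓ + 1) = 1 ∨ u (ℓ + 1) = 2))) ∧
    (∀ m, ℓ + 2 ≤ m → u m = 0 ∨ u m = 5)

/-- The equivalence relation `∼` on `Σ` generated by `Tilde`, as a setoid. -/
def simSetoid : Setoid Word := ⟨Relation.EqvGen Tilde, Relation.EqvGen.is_equivalence _⟩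

/-- The Strichartz hexacarpet `K = Σ/∼` (with the quotient topology, `ℤ/6` being
discrete and `Σ` carrying the product topology). -/
def Hexacarpet := Quotient simSetoid

instance : TopologicalSpace Hexacarpet :=
  instTopologicalSpaceQuotient

/-- The quotient map `π : Σ → K`. -/
def piK : Word → Hexacarpet := Quotient.mk simSetoid

/-- the Strichartz hexacarpet `K = Σ/∼` (with the quotient topology) is
not homeomorphic to a closed 2-simplex in the plane, i.e. to the convex hull of three
affinely independent points of `ℝ²`. -/

def RRel (u w : Word) : Prop := Tilde u w ∨ Tilde w u

lemma RRel.symm' {u w : Word} (h : RRel u w) : RRel w u := Or.symm h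

def GoodL (u : Word) (ℓ : ℕ) : Prop :=
  (u (ℓ+1) = 1 ∨ u (ℓ+1) = 2 ∨ u (ℓ+1) = 3 ∨ u (ℓ+1) = 4) ∧
    ∀ m, ℓ + 2 ≤ m → u m = 0 ∨ u m = 5

instance zmod6EvenDec : DecidablePred (Even : ZMod 6 → Prop) :=
  fun x => decidable_of_iff (∃ r : ZMod 6, x = r + r) Iff.rfl

lemma zmod6_even_succ : ∀ x : ZMod 6, Even (x + 1) ↔ ¬ Even x := by decide

lemma goodL_not_lt {u : Word} {l1 l2 : ℕ} (h1 : GoodL u l1) (h2 : GoodL u l2) :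
    ¬ (l1 < l2) := by
  intro hlt
  have ht := h1.2 (l2 + 1) (by omega)
  rcases h2.1 with h|h|h|h <;> rcases ht with h'|h' <;>
    exact absurd (h.symm.trans h') (by decide)

lemma goodL_unique {u : Word} {l1 l2 : ℕ} (h1 : GoodL u l1) (h2 : GoodL u l2) :
    l1 = l2 := by
  have a1 := goodL_not_lt h1 h2
  have a2 := goodL_not_lt h2 h1
  omega

lemma tilde_goodL {u w : Word} {ℓ : ℕ}
    (h : (∀ m < ℓ, u m = w m) ∧ w ℓ = u ℓ + 1 ∧ (∀ m > ℓ, u m = w m) ∧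
    ((¬ Even (u ℓ) ∧ (u (ℓ + 1) = 3 ∨ u (ℓ + 1) = 4)) ∨
      (Even (u ℓ) ∧ (u (ℓ + 1) = 1 ∨ u (ℓ + 1) = 2))) ∧
    (∀ m, ℓ + 2 ≤ m → u m = 0 ∨ u m = 5)) : GoodL u ℓ ∧ GoodL w ℓ := by
  obtain ⟨h1, h2, h3, h4, h5⟩ := h
  have hα : u (ℓ+1) = 1 ∨ u (ℓ+1) = 2 ∨ u (ℓ+1) = 3 ∨ u (ℓ+1) = 4 := by
    rcases h4 with ⟨_, h|h⟩ | ⟨_, h|h⟩ <;> tauto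
  have hwu : ∀ m > ℓ, w m = u m := fun m hm => (h3 m hm).symm
  refine ⟨⟨hα, h5⟩, ⟨?_, ?_⟩⟩
  · rw [hwu (ℓ+1) (by omega)]; exact hα
  · intro m hm; rw [hwu m (by omega)]; exact h5 m hm

lemma clash {u z : Word} {ℓ : ℕ}
    (hu4 : (¬ Even (u ℓ) ∧ (u (ℓ + 1) = 3 ∨ u (ℓ + 1) = 4)) ∨
      (Even (u ℓ) ∧ (u (ℓ + 1) = 1 ∨ u (ℓ + 1) = 2)))
    (hz4 : (¬ Even (z ℓ) ∧ (z (ℓ + 1) = 3 ∨ z (ℓ + 1) = 4)) ∨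
      (Even (z ℓ) ∧ (z (ℓ + 1) = 1 ∨ z (ℓ + 1) = 2)))
    (heq : u ℓ = z ℓ + 1) (hα : z (ℓ+1) = u (ℓ+1)) : False := by
  rcases hu4 with ⟨hp, ha⟩ | ⟨hp, ha⟩ <;> rcases hz4 with ⟨hq, hb⟩ | ⟨hq, hb⟩
  · exact hp (by rw [heq]; exact (zmod6_even_succ _).2 hq)
  · rw [hα] at hb
    rcases ha with h|h <;> rcases hb with h'|h' <;>
      exact absurd (h.symm.trans h') (by decide)
  · rw [hα] at hb
    rcases ha with h|h <;> rcases hb with h'|h' <;>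
      exact absurd (h.symm.trans h') (by decide)
  · have hne : ¬ Even (z ℓ + 1) := fun hc => ((zmod6_even_succ (z ℓ)).1 hc) hq
    exact hne (heq ▸ hp)

lemma rrel_unique {u v w : Word} (hv : RRel u v) (hw : RRel u w) : v = w := by
  rcases hv with hv | hv <;> rcases hw with hw | hw
  · obtain ⟨l1, e1, f1, g1, p1, q1⟩ := hv
    obtain ⟨l2, e2, f2, g2, p2, q2⟩ := hw
    have hg1 := (tilde_goodL ⟨e1, f1, g1, p1, q1⟩).1
    have hg2 := (tilde_goodL ⟨e2, f2, g2, p2, q2⟩).1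
    obtain rfl := goodL_unique hg1 hg2
    funext m
    rcases Nat.lt_trichotomy m l1 with hm|hm|hm
    · exact (e1 m hm).symm.trans (e2 m hm)
    · subst hm; rw [f1, f2]
    · exact (g1 m hm).symm.trans (g2 m hm)
  · obtain ⟨l1, e1, f1, g1, p1, q1⟩ := hv
    obtain ⟨l2, e2, f2, g2, p2, q2⟩ := hw
    have hg1 := (tilde_goodL ⟨e1, f1, g1, p1, q1⟩).1
    have hg2 := (tilde_goodL ⟨e2, f2, g2, p2, q2⟩).2
    obtain rfl := goodL_unique hg1 hg2
    exact (clash p1 p2 f2 (g2 (l1+1) (by omega))).elim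
  · obtain ⟨l1, e1, f1, g1, p1, q1⟩ := hv
    obtain ⟨l2, e2, f2, g2, p2, q2⟩ := hw
    have hg1 := (tilde_goodL ⟨e1, f1, g1, p1, q1⟩).2
    have hg2 := (tilde_goodL ⟨e2, f2, g2, p2, q2⟩).1
    obtain rfl := goodL_unique hg1 hg2
    exact (clash p2 p1 f1 (g1 (l1+1) (by omega))).elim
  · obtain ⟨l1, e1, f1, g1, p1, q1⟩ := hv
    obtain ⟨l2, e2, f2, g2, p2, q2⟩ := hw
    have hg1 := (tilde_goodL ⟨e1, f1, g1, p1, q1⟩).2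
    have hg2 := (tilde_goodL ⟨e2, f2, g2, p2, q2⟩).2
    obtain rfl := goodL_unique hg1 hg2
    funext m
    rcases Nat.lt_trichotomy m l1 with hm|hm|hm
    · exact (e1 m hm).trans (e2 m hm).symm
    · subst hm; exact add_right_cancel (f1.symm.trans f2)
    · exact (g1 m hm).trans (g2 m hm).symm

lemma eqvgen_cases {u v : Word} (h : Relation.EqvGen Tilde u v) : u = v ∨ RRel u v := by
  induction h with
  | rel x y hxy => exact Or.inr (Or.inl hxy)
  | refl x => exact Or.inl rfl
  | symm x y _ ih =>
      rcases ih with h|h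
      · exact Or.inl h.symm
      · exact Or.inr h.symm'
  | trans x y z _ _ ih1 ih2 =>
      rcases ih1 with h1|h1
      · rw [h1]; exact ih2
      · rcases ih2 with h2|h2
        · rw [← h2]; exact Or.inr h1
        · exact Or.inl (rrel_unique h1.symm' h2)

lemma no_three {u v w : Word} (huv : piK u = piK v) (hvw : piK v = piK w)
    (h1 : u ≠ v) (h2 : v ≠ w) (h3 : u ≠ w) : False := by
  have e1 : Relation.EqvGen Tilde u v := Quotient.exact huv
  have e2 : Relation.EqvGen Tilde v w := Quotient.exact hvw
  rcases eqvgen_cases e1 with h|r1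
  · exact h1 h
  rcases eqvgen_cases e2 with h|r2
  · exact h2 h
  exact h3 (rrel_unique r1.symm' r2)


def spDoor (x y : Fin 3) : ZMod 2 :=
  if (x = 1 ∧ y = 2) ∨ (x = 2 ∧ y = 1) then 1 else 0

lemma spDoor_symm (x y : Fin 3) : spDoor x y = spDoor y x := by
  revert x y; decide

lemma spDoor_no2 : ∀ x y : Fin 3, x ≠ 2 → y ≠ 2 → spDoor x y = 0 := by decide

lemma spDoor_no1 : ∀ x y : Fin 3, x ≠ 1 → y ≠ 1 → spDoor x y = 0 := by decide

lemma spKey : ∀ x y z : Fin 3,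
    spDoor x y + spDoor x z + spDoor y z ≠ 0 → x ≠ y ∧ x ≠ z ∧ y ≠ z := by decide

lemma zmod2_two : ∀ x : ZMod 2, x + x = 0 := by decide

lemma fin3_cases12 : ∀ x : Fin 3, x ≠ 0 → x = 1 ∨ x = 2 := by decide

lemma fin3_is2 : ∀ x : Fin 3, x ≠ 0 → x ≠ 1 → x = 2 := by decide

lemma fin3_is1 : ∀ x : Fin 3, x ≠ 0 → x ≠ 2 → x = 1 := by decide

lemma spStep : ∀ x y z : Fin 3, (x = 1 ∨ x = 2) → (y = 1 ∨ y = 2) → (z = 1 ∨ z = 2) →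
    ((if y = x then (0 : ZMod 2) else 1) + spDoor z y) = if z = x then 0 else 1 := by
  decide

def spH (n : ℕ) (col : ℕ → ℕ → Fin 3) (i j : ℕ) : ZMod 2 :=
  if i + j + 1 ≤ n then spDoor (col i j) (col (i+1) j) else 0

def spV (n : ℕ) (col : ℕ → ℕ → Fin 3) (i j : ℕ) : ZMod 2 :=
  if i + j + 1 ≤ n then spDoor (col i j) (col i (j+1)) else 0

def spD (n : ℕ) (col : ℕ → ℕ → Fin 3) (i j : ℕ) : ZMod 2 :=
  if i + j + 1 ≤ n then spDoor (col (i+1) j) (col i (j+1)) else 0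

def spD' (n : ℕ) (col : ℕ → ℕ → Fin 3) (i j : ℕ) : ZMod 2 :=
  if i + j + 2 ≤ n then spDoor (col (i+1) j) (col i (j+1)) else 0

lemma oneD (n : ℕ) (f : ℕ → Fin 3) (hf : ∀ i ≤ n, f i = 1 ∨ f i = 2) :
    ∀ m, m ≤ n → (∑ i ∈ Finset.range m, spDoor (f (i+1)) (f i))
      = if f m = f 0 then 0 else 1 := by
  intro m
  induction m with
  | zero => intro _; simp
  | succ k ih =>
      intro hk
      rw [Finset.sum_range_succ, ih (by omega)]
      exact spStep (f 0) (f k) (f (k+1)) (hf 0 (by omega)) (hf k (by omega)) (hf (k+1) hk)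

theorem sperner2D (n : ℕ) (hn : 0 < n) (col : ℕ → ℕ → Fin 3)
    (h0 : ∀ i j, i + j = n → col i j ≠ 0)
    (h1 : ∀ j, j ≤ n → col 0 j ≠ 1)
    (h2 : ∀ i, i ≤ n → col i 0 ≠ 2) :
    ∃ i j, (i + j + 1 ≤ n ∧ col i j ≠ col (i+1) j ∧ col i j ≠ col i (j+1) ∧
              col (i+1) j ≠ col i (j+1))
      ∨ (i + j + 2 ≤ n ∧ col (i+1) (j+1) ≠ col (i+1) j ∧
              col (i+1) (j+1) ≠ col i (j+1) ∧ col (i+1) j ≠ col i (j+1)) := by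
  by_contra hcon
  push_neg at hcon
  -- each up-triangle contributes 0
  have hup : ∀ i j, spH n col i j + spV n col i j + spD n col i j = 0 := by
    intro i j
    by_cases hg : i + j + 1 ≤ n
    · simp only [spH, spV, spD, if_pos hg]
      by_contra hne
      obtain ⟨d1, d2, d3⟩ := spKey _ _ _ hne
      exact d3 ((hcon i j).1 hg d1 d2)
    · simp only [spH, spV, spD, if_neg hg, add_zero]
  -- each down-triangle contributes 0
  have hdown : ∀ i j, spH n col i (j+1) + spV n col (i+1) j + spD' n col i j = 0 := by
    intro i j
    by_cases hg : i + j + 2 ≤ n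
    · have e1 : spH n col i (j+1) = spDoor (col i (j+1)) (col (i+1) (j+1)) := by
        simp only [spH]; rw [if_pos (by omega)]
      have e2 : spV n col (i+1) j = spDoor (col (i+1) j) (col (i+1) (j+1)) := by
        simp only [spV]; rw [if_pos (by omega)]
      have e3 : spD' n col i j = spDoor (col (i+1) j) (col i (j+1)) := by
        simp only [spD']; rw [if_pos hg]
      rw [e1, e2, e3]
      by_contra hne
      have hne' : spDoor (col (i+1) (j+1)) (col (i+1) j)
          + spDoor (col (i+1) (j+1)) (col i (j+1))
          + spDoor (col (i+1) j) (col i (j+1)) ≠ 0 := by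
        intro hz; apply hne
        rw [spDoor_symm (col i (j+1)) (col (i+1) (j+1)),
            spDoor_symm (col (i+1) j) (col (i+1) (j+1))]
        calc spDoor (col (i+1) (j+1)) (col i (j+1))
              + spDoor (col (i+1) (j+1)) (col (i+1) j)
              + spDoor (col (i+1) j) (col i (j+1))
            = spDoor (col (i+1) (j+1)) (col (i+1) j)
              + spDoor (col (i+1) (j+1)) (col i (j+1))
              + spDoor (col (i+1) j) (col i (j+1)) := by ring
          _ = 0 := hz
      obtain ⟨d1, d2, d3⟩ := spKey _ _ _ hne'
      exact d3 ((hcon i j).2 hg d1 d2)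
    · have e1 : spH n col i (j+1) = 0 := by simp only [spH]; rw [if_neg (by omega)]
      have e2 : spV n col (i+1) j = 0 := by simp only [spV]; rw [if_neg (by omega)]
      have e3 : spD' n col i j = 0 := by simp only [spD']; rw [if_neg hg]
      rw [e1, e2, e3]; ring
  -- total
  have htot : (∑ i ∈ Finset.range (n+1), ∑ j ∈ Finset.range (n+1),
      ((spH n col i j + spV n col i j + spD n col i j)
        + (spH n col i (j+1) + spV n col (i+1) j + spD' n col i j))) = 0 := by
    apply Finset.sum_eq_zero; intro i _
    apply Finset.sum_eq_zero; intro j _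
    rw [hup i j, hdown i j]; ring
  -- H rows telescope
  have hHrow : ∀ i, (∑ j ∈ Finset.range (n+1), (spH n col i j + spH n col i (j+1)))
      = spH n col i 0 := by
    intro i
    rw [Finset.sum_add_distrib]
    have e1 : (∑ j ∈ Finset.range (n+2), spH n col i j)
        = (∑ j ∈ Finset.range (n+1), spH n col i (j+1)) + spH n col i 0 :=
      Finset.sum_range_succ' _ _
    have e2 : (∑ j ∈ Finset.range (n+2), spH n col i j)
        = (∑ j ∈ Finset.range (n+1), spH n col i j) + spH n col i (n+1) :=
      Finset.sum_range_succ _ _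
    have e3 : spH n col i (n+1) = 0 := by simp only [spH]; rw [if_neg (by omega)]
    rw [e3, add_zero] at e2
    rw [e2] at e1
    rw [e1]
    calc (∑ j ∈ Finset.range (n+1), spH n col i (j+1)) + spH n col i 0
          + (∑ j ∈ Finset.range (n+1), spH n col i (j+1))
        = ((∑ j ∈ Finset.range (n+1), spH n col i (j+1))
          + (∑ j ∈ Finset.range (n+1), spH n col i (j+1))) + spH n col i 0 := by ring
      _ = spH n col i 0 := by rw [zmod2_two, zero_add]
  -- V columns telescope
  have hVcol : ∀ j, (∑ i ∈ Finset.range (n+1), (spV n col i j + spV n col (i+1) j))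
      = spV n col 0 j := by
    intro j
    rw [Finset.sum_add_distrib]
    have e1 : (∑ i ∈ Finset.range (n+2), spV n col i j)
        = (∑ i ∈ Finset.range (n+1), spV n col (i+1) j) + spV n col 0 j :=
      Finset.sum_range_succ' _ _
    have e2 : (∑ i ∈ Finset.range (n+2), spV n col i j)
        = (∑ i ∈ Finset.range (n+1), spV n col i j) + spV n col (n+1) j :=
      Finset.sum_range_succ _ _
    have e3 : spV n col (n+1) j = 0 := by simp only [spV]; rw [if_neg (by omega)]
    rw [e3, add_zero] at e2
    rw [e2] at e1
    rw [e1]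
    calc (∑ i ∈ Finset.range (n+1), spV n col (i+1) j) + spV n col 0 j
          + (∑ i ∈ Finset.range (n+1), spV n col (i+1) j)
        = ((∑ i ∈ Finset.range (n+1), spV n col (i+1) j)
          + (∑ i ∈ Finset.range (n+1), spV n col (i+1) j)) + spV n col 0 j := by ring
      _ = spV n col 0 j := by rw [zmod2_two, zero_add]
  -- diagonal pair
  have hDpt : ∀ i j, spD n col i j + spD' n col i j
      = if i + j + 1 = n then spDoor (col (i+1) j) (col i (j+1)) else 0 := by
    intro i j
    by_cases h2' : i + j + 2 ≤ n
    · have e1 : spD n col i j = spDoor (col (i+1) j) (col i (j+1)) := by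
        simp only [spD]; rw [if_pos (by omega)]
      have e2 : spD' n col i j = spDoor (col (i+1) j) (col i (j+1)) := by
        simp only [spD']; rw [if_pos h2']
      rw [e1, e2, zmod2_two, if_neg (by omega)]
    · by_cases h1' : i + j + 1 ≤ n
      · have e1 : spD n col i j = spDoor (col (i+1) j) (col i (j+1)) := by
          simp only [spD]; rw [if_pos h1']
        have e2 : spD' n col i j = 0 := by simp only [spD']; rw [if_neg h2']
        rw [e1, e2, add_zero, if_pos (by omega)]
      · have e1 : spD n col i j = 0 := by simp only [spD]; rw [if_neg h1']
        have e2 : spD' n col i j = 0 := by simp only [spD']; rw [if_neg h2']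
        rw [e1, e2, add_zero, if_neg (by omega)]
  -- compute the three blocks
  have hA : (∑ i ∈ Finset.range (n+1),
      ∑ j ∈ Finset.range (n+1), (spH n col i j + spH n col i (j+1))) = 0 := by
    apply Finset.sum_eq_zero; intro i _
    rw [hHrow i]
    simp only [spH]
    by_cases hg : i + 0 + 1 ≤ n
    · rw [if_pos hg]
      exact spDoor_no2 _ _ (h2 i (by omega)) (h2 (i+1) (by omega))
    · rw [if_neg hg]
  have hB : (∑ i ∈ Finset.range (n+1),
      ∑ j ∈ Finset.range (n+1), (spV n col i j + spV n col (i+1) j)) = 0 := by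
    rw [Finset.sum_comm]
    apply Finset.sum_eq_zero; intro j _
    rw [hVcol j]
    simp only [spV]
    by_cases hg : 0 + j + 1 ≤ n
    · rw [if_pos hg]
      exact spDoor_no1 _ _ (h1 j (by omega)) (h1 (j+1) (by omega))
    · rw [if_neg hg]
  have hC : (∑ i ∈ Finset.range (n+1),
      ∑ j ∈ Finset.range (n+1), (spD n col i j + spD' n col i j)) = 1 := by
    have hinner : ∀ i, (∑ j ∈ Finset.range (n+1), (spD n col i j + spD' n col i j))
        = if i + 1 ≤ n then spDoor (col (i+1) (n-i-1)) (col i (n-i)) else 0 := by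
      intro i
      by_cases hi : i + 1 ≤ n
      · rw [if_pos hi]
        have : ∀ j ∈ Finset.range (n+1), j ≠ n - i - 1 →
            spD n col i j + spD' n col i j = 0 := by
          intro j _ hj
          rw [hDpt i j, if_neg (by omega)]
        rw [Finset.sum_eq_single (n - i - 1) this
          (fun hna => absurd (Finset.mem_range.2 (by omega)) hna)]
        rw [hDpt, if_pos (by omega)]
        have hj1 : n - i - 1 + 1 = n - i := by omega
        rw [hj1]
      · rw [if_neg hi]
        apply Finset.sum_eq_zero; intro j _
        rw [hDpt i j, if_neg (by omega)]
    have hfd : ∀ i ≤ n, col i (n-i) = 1 ∨ col i (n-i) = 2 := by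
      intro i hi
      exact fin3_cases12 _ (h0 i (n-i) (by omega))
    calc (∑ i ∈ Finset.range (n+1),
          ∑ j ∈ Finset.range (n+1), (spD n col i j + spD' n col i j))
        = ∑ i ∈ Finset.range (n+1),
            (if i + 1 ≤ n then spDoor (col (i+1) (n-i-1)) (col i (n-i)) else 0) := by
          exact Finset.sum_congr rfl (fun i _ => hinner i)
      _ = (∑ i ∈ Finset.range n,
            (if i + 1 ≤ n then spDoor (col (i+1) (n-i-1)) (col i (n-i)) else 0))
          + (if n + 1 ≤ n then spDoor (col (n+1) (n-n-1)) (col n (n-n)) else 0) :=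
          Finset.sum_range_succ _ _
      _ = ∑ i ∈ Finset.range n, spDoor (col (i+1) (n-(i+1))) (col i (n-i)) := by
          rw [if_neg (by omega), add_zero]
          refine Finset.sum_congr rfl (fun i hi => ?_)
          have hi' := Finset.mem_range.1 hi
          rw [if_pos (by omega)]
          have : n - i - 1 = n - (i+1) := by omega
          rw [this]
      _ = if col n (n-n) = col 0 (n-0) then 0 else 1 :=
          oneD n (fun i => col i (n-i)) hfd n (le_refl n)
      _ = 1 := by
          have ha : col n (n-n) = 1 := by
            have : n - n = 0 := by omega
            rw [this]
            exact fin3_is1 _ (h0 n 0 (by omega)) (h2 n (le_refl n))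
          have hb : col 0 (n-0) = 2 := by
            have : n - 0 = n := by omega
            rw [this]
            exact fin3_is2 _ (h0 0 n (by omega)) (h1 n (le_refl n))
          rw [ha, hb, if_neg (by decide)]
  -- combine
  have hsplit : (∑ i ∈ Finset.range (n+1), ∑ j ∈ Finset.range (n+1),
      ((spH n col i j + spV n col i j + spD n col i j)
        + (spH n col i (j+1) + spV n col (i+1) j + spD' n col i j)))
      = (∑ i ∈ Finset.range (n+1),
          ∑ j ∈ Finset.range (n+1), (spH n col i j + spH n col i (j+1)))
        + (∑ i ∈ Finset.range (n+1),
          ∑ j ∈ Finset.range (n+1), (spV n col i j + spV n col (i+1) j))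
        + (∑ i ∈ Finset.range (n+1),
          ∑ j ∈ Finset.range (n+1), (spD n col i j + spD' n col i j)) := by
    rw [← Finset.sum_add_distrib, ← Finset.sum_add_distrib]
    refine Finset.sum_congr rfl (fun i _ => ?_)
    rw [← Finset.sum_add_distrib, ← Finset.sum_add_distrib]
    refine Finset.sum_congr rfl (fun j _ => ?_)
    ring
  rw [hsplit, hA, hB, hC] at htot
  simp at htot



section CylStuff

open Metric in
lemma cylinder_open (N : ℕ) (u : Word) : IsOpen {v : Word | ∀ m < N, v m = u m} := by
  have : {v : Word | ∀ m < N, v m = u m}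
      = ⋂ m : Fin N, (fun v : Word => v m) ⁻¹' {u m} := by
    ext v
    simp only [Set.mem_setOf_eq, Set.mem_iInter, Set.mem_preimage, Set.mem_singleton_iff]
    exact ⟨fun h m => h m m.2, fun h m hm => h ⟨m, hm⟩⟩
  rw [this]
  exact isOpen_iInter_of_finite fun m =>
    (continuous_apply (m : ℕ)).isOpen_preimage _ (isOpen_discrete _)

lemma cylinder_closed (N : ℕ) (u : Word) : IsClosed {v : Word | ∀ m < N, v m = u m} := by
  have : {v : Word | ∀ m < N, v m = u m}
      = ⋂ m : Fin N, (fun v : Word => v m) ⁻¹' {u m} := by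
    ext v
    simp only [Set.mem_setOf_eq, Set.mem_iInter, Set.mem_preimage, Set.mem_singleton_iff]
    exact ⟨fun h m => h m m.2, fun h m hm => h ⟨m, hm⟩⟩
  rw [this]
  exact isClosed_iInter fun m =>
    IsClosed.preimage (continuous_apply (m : ℕ)) isClosed_singleton

lemma cyl_basis {U : Set Word} (hU : IsOpen U) {u : Word} (hu : u ∈ U) :
    ∃ N, ∀ v : Word, (∀ m < N, v m = u m) → v ∈ U := by
  obtain ⟨I, us, hIu, hsub⟩ := isOpen_pi_iff.mp hU u hu
  refine ⟨(I.sup id) + 1, fun v hv => hsub ?_⟩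
  intro m hm
  have hle : m ≤ I.sup id := Finset.le_sup (f := id) hm
  rw [hv m (by omega)]
  exact (hIu m hm).2

lemma small_cylinders (G : Word → ℝ × ℝ) (hG : Continuous G) {ε : ℝ} (hε : 0 < ε) :
    ∃ N, ∀ u v : Word, (∀ m < N, u m = v m) → dist (G u) (G v) < ε := by
  have hball : ∀ u : Word, ∃ N, ∀ v : Word, (∀ m < N, v m = u m) →
      dist (G v) (G u) < ε / 2 := by
    intro u
    have hop : IsOpen (G ⁻¹' Metric.ball (G u) (ε / 2)) :=
      hG.isOpen_preimage _ Metric.isOpen_ball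
    have hmem : u ∈ G ⁻¹' Metric.ball (G u) (ε / 2) := by
      simp [Metric.mem_ball, half_pos hε]
    obtain ⟨N, hN⟩ := cyl_basis hop hmem
    exact ⟨N, fun v hv => hN v hv⟩
  choose Nf hNf using hball
  have hcover : (Set.univ : Set Word) ⊆
      ⋃ w : Word, {v : Word | ∀ m < Nf w, v m = w m} := by
    intro v _
    exact Set.mem_iUnion.2 ⟨v, fun m _ => rfl⟩
  obtain ⟨t, ht⟩ := isCompact_univ.elim_finite_subcover _
    (fun w => cylinder_open (Nf w) w) hcover
  refine ⟨(t.sup Nf) + 1, fun u v huv => ?_⟩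
  obtain ⟨w, hw, hu⟩ := by
    have := ht (Set.mem_univ u)
    simpa using this
  have hNw : Nf w ≤ t.sup Nf := Finset.le_sup hw
  have hvw : ∀ m < Nf w, v m = w m := by
    intro m hm
    rw [← huv m (by omega)]
    exact hu m hm
  have d1 := hNf w u hu
  have d2 := hNf w v hvw
  calc dist (G u) (G v) ≤ dist (G u) (G w) + dist (G w) (G v) := dist_triangle _ _ _
    _ < ε / 2 + ε / 2 := by
        rw [dist_comm (G w) (G v)]
        exact add_lt_add d1 d2
    _ = ε := by ring

def Cyl (M : ℕ) (x : Fin M → ZMod 6) : Set Word :=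
  {v : Word | ∀ (m : ℕ) (hm : m < M), v m = x ⟨m, hm⟩}

def witW (M : ℕ) (x : Fin M → ZMod 6) : Word :=
  fun m => if hm : m < M then x ⟨m, hm⟩ else 0

lemma witW_mem (M : ℕ) (x : Fin M → ZMod 6) : witW M x ∈ Cyl M x := by
  intro m hm
  simp only [witW]
  rw [dif_pos hm]

lemma Cyl_eq (M : ℕ) (x : Fin M → ZMod 6) :
    Cyl M x = {v : Word | ∀ m < M, v m = witW M x m} := by
  ext v
  constructor
  · intro hv m hm
    exact (hv m hm).trans (witW_mem M x m hm).symm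
  · intro hv m hm
    exact (hv m hm).trans (witW_mem M x m hm)

lemma Cyl_isCompact (M : ℕ) (x : Fin M → ZMod 6) : IsCompact (Cyl M x) := by
  rw [Cyl_eq]
  exact (cylinder_closed M (witW M x)).isCompact

lemma Cyl_disj {M : ℕ} {x y : Fin M → ZMod 6} (hxy : x ≠ y) {u : Word}
    (hx : u ∈ Cyl M x) (hy : u ∈ Cyl M y) : False := by
  apply hxy
  funext m
  exact (hx m.1 m.2).symm.trans (hy m.1 m.2)

lemma mem_Cyl_rst (M : ℕ) (u : Word) : u ∈ Cyl M (fun i => u i.1) :=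
  fun _ _ => rfl

end CylStuff


lemma pair_indep {a b c : ℝ × ℝ} (h : AffineIndependent ℝ ![a, b, c]) :
    ∀ s t : ℝ, s • (b - a) + t • (c - a) = 0 → s = 0 ∧ t = 0 := by
  intro s t hst
  by_contra hc
  apply affineIndependent_iff_not_collinear.mp h
  have hr : Set.range ![a, b, c] = {a, b, c} := by
    ext p
    simp only [Matrix.range_cons, Matrix.range_empty, Set.union_empty, Set.union_singleton,
      Set.mem_insert_iff, Set.mem_singleton_iff, Set.mem_union]
    tauto
  rw [hr, collinear_iff_exists_forall_eq_smul_vadd]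
  by_cases ht : t = 0
  · subst ht
    have hs : s ≠ 0 := fun h' => hc ⟨h', rfl⟩
    have hb : b = a := by
      have h1 : s • (b - a) = 0 := by simpa using hst
      rcases smul_eq_zero.mp h1 with h'|h'
      · exact absurd h' hs
      · exact sub_eq_zero.mp h'
    refine ⟨a, c - a, ?_⟩
    intro p hp
    simp only [Set.mem_insert_iff, Set.mem_singleton_iff] at hp
    rcases hp with rfl|rfl|rfl
    · exact ⟨0, by simp⟩
    · exact ⟨0, by simp [hb]⟩
    · exact ⟨1, by simp⟩
  · refine ⟨a, b - a, ?_⟩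
    intro p hp
    simp only [Set.mem_insert_iff, Set.mem_singleton_iff] at hp
    have h1 : t • (c - a) = -(s • (b - a)) := eq_neg_of_add_eq_zero_right hst
    have h2 : c - a = (-s/t) • (b - a) := by
      have h3 : c - a = t⁻¹ • (t • (c - a)) := (inv_smul_smul₀ ht _).symm
      rw [h1, smul_neg, smul_smul] at h3
      rw [h3, ← neg_smul]
      congr 1
      field_simp
    rcases hp with rfl|rfl|rfl
    · exact ⟨0, by simp⟩
    · exact ⟨1, by simp⟩
    · refine ⟨-s/t, ?_⟩
      have : p = (-s/t) • (b - a) + a := by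
        rw [← h2]; abel
      simpa using this

set_option maxHeartbeats 2000000 in
lemma master (a b c : ℝ × ℝ) (h : AffineIndependent ℝ ![a, b, c])
    (G : Word → ℝ × ℝ) (hGcont : Continuous G)
    (hGmem : ∀ u, G u ∈ convexHull ℝ {a, b, c})
    (hGsurj : ∀ y ∈ convexHull ℝ {a, b, c}, ∃ u, G u = y)
    (hG3 : ∀ u v w : Word, u ≠ v → v ≠ w → u ≠ w → G u = G v → G v = G w → False) :
    False := by
  have haΔ : a ∈ convexHull ℝ {a, b, c} := subset_convexHull ℝ _ (by simp)
  have hbΔ : b ∈ convexHull ℝ {a, b, c} := subset_convexHull ℝ _ (by simp)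
  have hcΔ : c ∈ convexHull ℝ {a, b, c} := subset_convexHull ℝ _ (by simp)
  have hconv : Convex ℝ (convexHull ℝ ({a, b, c} : Set (ℝ × ℝ))) := convex_convexHull ℝ _
  have hΔc : IsCompact (convexHull ℝ ({a, b, c} : Set (ℝ × ℝ))) :=
    (Set.toFinite {a, b, c}).isCompact_convexHull ℝ
  have hseg : ∀ x y : ℝ × ℝ, segment ℝ x y = (fun θ : ℝ => x + θ • (y - x)) '' Set.Icc 0 1 :=
    fun x y => segment_eq_image' ℝ x y
  have hs0sub : segment ℝ b c ⊆ convexHull ℝ {a, b, c} := hconv.segment_subset hbΔ hcΔ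
  have hs1sub : segment ℝ a c ⊆ convexHull ℝ {a, b, c} := hconv.segment_subset haΔ hcΔ
  have hs2sub : segment ℝ a b ⊆ convexHull ℝ {a, b, c} := hconv.segment_subset haΔ hbΔ
  have hsegC : ∀ x y : ℝ × ℝ, IsCompact (segment ℝ x y) := by
    intro x y
    rw [hseg]
    exact isCompact_Icc.image (by continuity)
  have hkey : ∀ s : ℝ, a + (1 - s) • (b - a) + s • (c - a) = b + s • (c - b) := by
    intro s; module
  -- the three sides have no common point
  have hsides : ∀ x : ℝ × ℝ,
      x ∈ segment ℝ b c → x ∈ segment ℝ a c → x ∈ segment ℝ a b → False := by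
    intro x h0 h1 h2
    rw [hseg] at h0 h1 h2
    obtain ⟨θ₀, hθ₀, e0⟩ := h0
    obtain ⟨θ₁, hθ₁, e1⟩ := h1
    obtain ⟨θ₂, hθ₂, e2⟩ := h2
    simp only at e0 e1 e2
    have hx : θ₂ • (b - a) + (-θ₁) • (c - a) = 0 := by
      have h' : θ₂ • (b - a) = θ₁ • (c - a) := add_left_cancel (e2.trans e1.symm)
      rw [h']; module
    obtain ⟨hz2, hz1⟩ := pair_indep h _ _ hx
    have hθ1z : θ₁ = 0 := by linarith [neg_eq_zero.mp hz1]
    have hxa : x = a := by rw [← e1, hθ1z]; simp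
    have e0' : a = b + θ₀ • (c - b) := by rw [← hxa, e0]
    have h5 : a + ((1 - θ₀) • (b - a) + θ₀ • (c - a)) = a + 0 := by
      rw [add_zero, ← add_assoc, hkey θ₀, ← e0']
    obtain ⟨hA, hB⟩ := pair_indep h _ _ (add_left_cancel h5)
    linarith
  -- quantitative version
  have hside_eps : ∃ ε > 0, ∀ x ∈ convexHull ℝ ({a, b, c} : Set (ℝ × ℝ)),
      ε ≤ infDist x (segment ℝ b c) + infDist x (segment ℝ a c)
        + infDist x (segment ℝ a b) := by
    have hcont : Continuous fun x : ℝ × ℝ => infDist x (segment ℝ b c)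
        + infDist x (segment ℝ a c) + infDist x (segment ℝ a b) :=
      ((continuous_infDist_pt _).add (continuous_infDist_pt _)).add (continuous_infDist_pt _)
    obtain ⟨x₀, hx₀, hmin⟩ := hΔc.exists_isMinOn ⟨a, haΔ⟩ hcont.continuousOn
    refine ⟨_, ?_, fun x hx => isMinOn_iff.mp hmin x hx⟩
    have hge : 0 ≤ infDist x₀ (segment ℝ b c) + infDist x₀ (segment ℝ a c)
        + infDist x₀ (segment ℝ a b) := by
      have := infDist_nonneg (s := segment ℝ b c) (x := x₀)
      have := infDist_nonneg (s := segment ℝ a c) (x := x₀)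
      have := infDist_nonneg (s := segment ℝ a b) (x := x₀)
      linarith
    rcases eq_or_lt_of_le hge with heq|hlt
    · exfalso
      have n0 := infDist_nonneg (s := segment ℝ b c) (x := x₀)
      have n1 := infDist_nonneg (s := segment ℝ a c) (x := x₀)
      have n2 := infDist_nonneg (s := segment ℝ a b) (x := x₀)
      have m0 : x₀ ∈ segment ℝ b c :=
        ((hsegC b c).isClosed.mem_iff_infDist_zero ⟨b, left_mem_segment ℝ b c⟩).2
          (by linarith)
      have m1 : x₀ ∈ segment ℝ a c :=
        ((hsegC a c).isClosed.mem_iff_infDist_zero ⟨a, left_mem_segment ℝ a c⟩).2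
          (by linarith)
      have m2 : x₀ ∈ segment ℝ a b :=
        ((hsegC a b).isClosed.mem_iff_infDist_zero ⟨a, left_mem_segment ℝ a b⟩).2
          (by linarith)
      exact hsides x₀ m0 m1 m2
    · exact hlt
  obtain ⟨εs, hεs, hεsle⟩ := hside_eps
  -- small cylinders
  obtain ⟨N₀, hN₀⟩ := small_cylinders G hGcont (by positivity : (0:ℝ) < εs / 4)
  set M := N₀ + 1 with hMdef
  set DD : (Fin M → ZMod 6) → Set (ℝ × ℝ) := fun x => G '' Cyl M x with hDDdef
  have hDDc : ∀ x, IsCompact (DD x) := fun x => (Cyl_isCompact M x).image hGcont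
  have hDDne : ∀ x, (DD x).Nonempty := fun x => ⟨G (witW M x), ⟨witW M x, witW_mem M x, rfl⟩⟩
  have hDDsub : ∀ x, DD x ⊆ convexHull ℝ {a, b, c} := by
    rintro x p ⟨u, _, rfl⟩
    exact hGmem u
  have hDDsmall : ∀ x p q, p ∈ DD x → q ∈ DD x → dist p q < εs / 4 := by
    rintro x p q ⟨u, hu, rfl⟩ ⟨v, hv, rfl⟩
    apply hN₀
    intro m hm
    exact (hu m (by omega)).trans (hv m (by omega)).symm
  -- no point lies in three distinct pieces
  have htrip0 : ∀ x y z : Fin M → ZMod 6, x ≠ y → y ≠ z → x ≠ z →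
      ∀ p : ℝ × ℝ, p ∈ DD x → p ∈ DD y → p ∈ DD z → False := by
    intro x y z hxy hyz hxz p hpx hpy hpz
    obtain ⟨u, hu, hup⟩ := hpx
    obtain ⟨v, hv, hvp⟩ := hpy
    obtain ⟨w, hw, hwp⟩ := hpz
    have huv : u ≠ v := fun he => Cyl_disj hxy (he ▸ hu) hv
    have hvw : v ≠ w := fun he => Cyl_disj hyz (he ▸ hv) hw
    have huw : u ≠ w := fun he => Cyl_disj hxz (he ▸ hu) hw
    exact hG3 u v w huv hvw huw (hup.trans hvp.symm) (hvp.trans hwp.symm)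
  -- uniform positive lower bound for triples
  have hdelta : ∀ T : (Fin M → ZMod 6) × (Fin M → ZMod 6) × (Fin M → ZMod 6),
      ∃ d : ℝ, 0 < d ∧ (T.1 ≠ T.2.1 → T.2.1 ≠ T.2.2 → T.1 ≠ T.2.2 →
        ∀ p ∈ convexHull ℝ ({a, b, c} : Set (ℝ × ℝ)),
          d ≤ infDist p (DD T.1) + infDist p (DD T.2.1) + infDist p (DD T.2.2)) := by
    rintro ⟨x, y, z⟩
    by_cases hd : x ≠ y ∧ y ≠ z ∧ x ≠ z
    · obtain ⟨hxy, hyz, hxz⟩ := hd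
      have hcont : Continuous fun p : ℝ × ℝ =>
          infDist p (DD x) + infDist p (DD y) + infDist p (DD z) :=
        ((continuous_infDist_pt _).add (continuous_infDist_pt _)).add (continuous_infDist_pt _)
      obtain ⟨p₀, hp₀, hmin⟩ := hΔc.exists_isMinOn ⟨a, haΔ⟩ hcont.continuousOn
      refine ⟨_, ?_, fun _ _ _ p hp => isMinOn_iff.mp hmin p hp⟩
      have n0 := infDist_nonneg (s := DD x) (x := p₀)
      have n1 := infDist_nonneg (s := DD y) (x := p₀)
      have n2 := infDist_nonneg (s := DD z) (x := p₀)
      rcases eq_or_lt_of_le (by linarith :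
          (0:ℝ) ≤ infDist p₀ (DD x) + infDist p₀ (DD y) + infDist p₀ (DD z)) with heq|hlt
      · exfalso
        have m0 : p₀ ∈ DD x :=
          ((hDDc x).isClosed.mem_iff_infDist_zero (hDDne x)).2 (by linarith)
        have m1 : p₀ ∈ DD y :=
          ((hDDc y).isClosed.mem_iff_infDist_zero (hDDne y)).2 (by linarith)
        have m2 : p₀ ∈ DD z :=
          ((hDDc z).isClosed.mem_iff_infDist_zero (hDDne z)).2 (by linarith)
        exact htrip0 x y z hxy hyz hxz p₀ m0 m1 m2
      · exact hlt
    · exact ⟨1, one_pos, by tauto⟩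
  choose δf hδf using hdelta
  haveI hne3 : Nonempty ((Fin M → ZMod 6) × (Fin M → ZMod 6) × (Fin M → ZMod 6)) :=
    ⟨⟨fun _ => 0, fun _ => 0, fun _ => 0⟩⟩
  set δ := Finset.univ.inf' Finset.univ_nonempty δf with hδdef
  have hδpos : 0 < δ := by
    rw [hδdef, Finset.lt_inf'_iff]
    exact fun t _ => (hδf t).1
  have hδle : ∀ T, δ ≤ δf T := fun T => Finset.inf'_le _ (Finset.mem_univ T)
  -- choose the mesh
  obtain ⟨n, hngt⟩ := exists_nat_gt ((2 * (‖b - a‖ + ‖c - a‖)) / δ + 1)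
  have hnR : (0:ℝ) < n := by
    have h1 : (0:ℝ) ≤ (2 * (‖b - a‖ + ‖c - a‖)) / δ := by positivity
    linarith
  have hn0 : 0 < n := by exact_mod_cast hnR
  have hmesh2 : 2 * (‖b - a‖ + ‖c - a‖) < δ * n := by
    have h1 : (2 * (‖b - a‖ + ‖c - a‖)) / δ < n := by linarith
    calc 2 * (‖b - a‖ + ‖c - a‖) = ((2 * (‖b - a‖ + ‖c - a‖)) / δ) * δ := by
          field_simp
      _ < n * δ := mul_lt_mul_of_pos_right h1 hδpos
      _ = δ * n := mul_comm _ _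
  -- grid points
  set P : ℕ → ℕ → ℝ × ℝ :=
    fun i j => a + ((i:ℝ)/n) • (b - a) + ((j:ℝ)/n) • (c - a) with hPdef
  have mem_tri : ∀ x y : ℝ, 0 ≤ x → 0 ≤ y → x + y ≤ 1 →
      a + x • (b - a) + y • (c - a) ∈ convexHull ℝ {a, b, c} := by
    intro x y hx hy hxy
    rcases eq_or_lt_of_le (add_nonneg hx hy) with h0|h0
    · have hx0 : x = 0 := by linarith
      have hy0 : y = 0 := by linarith
      rw [hx0, hy0]
      simpa using haΔ
    · have hτ0 : 0 ≤ y / (x + y) := by positivity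
      have hτ1 : y / (x + y) ≤ 1 := by
        rw [div_le_one h0]; linarith
      have hms : b + (y / (x + y)) • (c - b) ∈ segment ℝ b c := by
        rw [hseg]; exact ⟨y / (x + y), ⟨hτ0, hτ1⟩, rfl⟩
      have hmΔ : b + (y / (x + y)) • (c - b) ∈ convexHull ℝ {a, b, c} := hs0sub hms
      have hq : (x + y) * (y / (x + y)) = y := by field_simp
      have heq : a + x • (b - a) + y • (c - a)
          = a + (x + y) • ((b + (y / (x + y)) • (c - b)) - a) := by
        have expand : a + (x + y) • ((b + (y / (x + y)) • (c - b)) - a)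
            = a + (x + y) • (b - a) + ((x + y) * (y / (x + y))) • (c - b) := by
          module
        rw [expand, hq]
        module
      rw [heq]
      have hseg2 : a + (x + y) • ((b + (y / (x + y)) • (c - b)) - a)
          ∈ segment ℝ a (b + (y / (x + y)) • (c - b)) := by
        rw [hseg]; exact ⟨x + y, ⟨by linarith, hxy⟩, rfl⟩
      exact hconv.segment_subset haΔ hmΔ hseg2
  have hPmem : ∀ i j, i + j ≤ n → P i j ∈ convexHull ℝ ({a, b, c} : Set (ℝ × ℝ)) := by
    intro i j hij
    simp only [hPdef]
    apply mem_tri _ _ (by positivity) (by positivity)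
    rw [← add_div, div_le_one hnR]
    exact_mod_cast hij
  have hPs0 : ∀ i j, i + j = n → P i j ∈ segment ℝ b c := by
    intro i j hij
    rw [hseg]
    have hjn : (j:ℝ) ≤ n := by
      have : j ≤ n := by omega
      exact_mod_cast this
    refine ⟨(j:ℝ)/n, ⟨by positivity, by rw [div_le_one hnR]; exact hjn⟩, ?_⟩
    have hiR : (i:ℝ)/n = 1 - (j:ℝ)/n := by
      have h1 : (i:ℝ) + (j:ℝ) = (n:ℝ) := by exact_mod_cast hij
      field_simp
      linarith
    show b + ((j:ℝ)/n) • (c - b) = P i j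
    simp only [hPdef]
    rw [hiR, ← hkey ((j:ℝ)/n)]
  have hPs1 : ∀ j, j ≤ n → P 0 j ∈ segment ℝ a c := by
    intro j hj
    rw [hseg]
    refine ⟨(j:ℝ)/n, ⟨by positivity, by
      rw [div_le_one hnR]; exact_mod_cast hj⟩, ?_⟩
    show a + ((j:ℝ)/n) • (c - a) = P 0 j
    simp only [hPdef]
    norm_num
  have hPs2 : ∀ i, i ≤ n → P i 0 ∈ segment ℝ a b := by
    intro i hi
    rw [hseg]
    refine ⟨(i:ℝ)/n, ⟨by positivity, by
      rw [div_le_one hnR]; exact_mod_cast hi⟩, ?_⟩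
    show a + ((i:ℝ)/n) • (b - a) = P i 0
    simp only [hPdef]
    norm_num
  -- mesh bounds
  have hPd1 : ∀ i j, dist (P (i+1) j) (P i j) ≤ (‖b - a‖ + ‖c - a‖) / n := by
    intro i j
    have hstep : P (i+1) j = P i j + ((1:ℝ)/n) • (b - a) := by
      simp only [hPdef]
      have hc : ((i+1:ℕ):ℝ)/(n:ℝ) = (i:ℝ)/n + 1/n := by push_cast; ring
      rw [hc, add_smul]
      abel
    rw [hstep, dist_eq_norm]
    have hdd : P i j + ((1:ℝ)/n) • (b - a) - P i j = ((1:ℝ)/n) • (b - a) := by abel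
    rw [hdd, norm_smul]
    rw [Real.norm_of_nonneg (by positivity)]
    rw [div_mul_eq_mul_div, one_mul]
    gcongr
    linarith [norm_nonneg (c - a)]
  have hPd2 : ∀ i j, dist (P i (j+1)) (P i j) ≤ (‖b - a‖ + ‖c - a‖) / n := by
    intro i j
    have hstep : P i (j+1) = P i j + ((1:ℝ)/n) • (c - a) := by
      simp only [hPdef]
      have hc : ((j+1:ℕ):ℝ)/(n:ℝ) = (j:ℝ)/n + 1/n := by push_cast; ring
      rw [hc, add_smul]
      abel
    rw [hstep, dist_eq_norm]
    have hdd : P i j + ((1:ℝ)/n) • (c - a) - P i j = ((1:ℝ)/n) • (c - a) := by abel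
    rw [hdd, norm_smul]
    rw [Real.norm_of_nonneg (by positivity)]
    rw [div_mul_eq_mul_div, one_mul]
    gcongr
    linarith [norm_nonneg (b - a)]
  -- the coloring
  have hpick : ∀ q : ℕ × ℕ, ∃ x : Fin M → ZMod 6,
      (q.1 + q.2 ≤ n → P q.1 q.2 ∈ DD x) := by
    rintro ⟨i, j⟩
    by_cases hv : i + j ≤ n
    · obtain ⟨u, hu⟩ := hGsurj (P i j) (hPmem i j hv)
      exact ⟨fun m => u m.1, fun _ => ⟨u, mem_Cyl_rst M u, hu⟩⟩
    · exact ⟨fun _ => 0, fun hv' => absurd hv' hv⟩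
  choose ixf hixf using hpick
  set colF : ℕ × ℕ → Fin 3 := fun q =>
    if DD (ixf q) ∩ segment ℝ b c = ∅ then 0
    else if DD (ixf q) ∩ segment ℝ a c = ∅ then 1 else 2 with hcolF
  have hcol0 : ∀ q, colF q = 0 → DD (ixf q) ∩ segment ℝ b c = ∅ := by
    intro q hq
    simp only [hcolF] at hq
    split_ifs at hq with h1 h2
    · exact h1
    · exact absurd hq (by decide)
    · exact absurd hq (by decide)
  have hcol1 : ∀ q, colF q = 1 →
      DD (ixf q) ∩ segment ℝ a c = ∅ ∧ ¬ DD (ixf q) ∩ segment ℝ b c = ∅ := by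
    intro q hq
    simp only [hcolF] at hq
    split_ifs at hq with h1 h2
    · exact absurd hq (by decide)
    · exact ⟨h2, h1⟩
    · exact absurd hq (by decide)
  have hcol2 : ∀ q, colF q = 2 →
      ¬ DD (ixf q) ∩ segment ℝ b c = ∅ ∧ ¬ DD (ixf q) ∩ segment ℝ a c = ∅ := by
    intro q hq
    simp only [hcolF] at hq
    split_ifs at hq with h1 h2
    · exact absurd hq (by decide)
    · exact absurd hq (by decide)
    · exact ⟨h1, h2⟩
  have hcoldet : ∀ p q : ℕ × ℕ, ixf p = ixf q → colF p = colF q := by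
    intro p q hpq
    simp only [hcolF, hpq]
  -- Sperner hypotheses
  have h0' : ∀ i j, i + j = n → colF (i, j) ≠ 0 := by
    intro i j hij hc
    have hempty := hcol0 _ hc
    have hmem1 : P i j ∈ DD (ixf (i, j)) := hixf (i, j) (le_of_eq hij)
    exact Set.eq_empty_iff_forall_notMem.mp hempty (P i j) ⟨hmem1, hPs0 i j hij⟩
  have h1' : ∀ j, j ≤ n → colF (0, j) ≠ 1 := by
    intro j hj hc
    have hempty := (hcol1 _ hc).1
    have hmem1 : P 0 j ∈ DD (ixf (0, j)) := hixf (0, j) (by simpa using hj)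
    exact Set.eq_empty_iff_forall_notMem.mp hempty (P 0 j) ⟨hmem1, hPs1 j hj⟩
  have h2' : ∀ i, i ≤ n → colF (i, 0) ≠ 2 := by
    intro i hi hc
    obtain ⟨hne0, hne1⟩ := hcol2 _ hc
    obtain ⟨z0, hz0D, hz0s⟩ := Set.nonempty_iff_ne_empty.2 hne0
    obtain ⟨z1, hz1D, hz1s⟩ := Set.nonempty_iff_ne_empty.2 hne1
    have hmem1 : P i 0 ∈ DD (ixf (i, 0)) := hixf (i, 0) (by simpa using hi)
    have hz0Δ : z0 ∈ convexHull ℝ ({a, b, c} : Set (ℝ × ℝ)) := hDDsub _ hz0D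
    have hd1 : dist z0 z1 < εs / 4 := hDDsmall _ _ _ hz0D hz1D
    have hd2 : dist z0 (P i 0) < εs / 4 := hDDsmall _ _ _ hz0D hmem1
    have i0 : infDist z0 (segment ℝ b c) = 0 := infDist_zero_of_mem hz0s
    have i1 : infDist z0 (segment ℝ a c) ≤ dist z0 z1 := infDist_le_dist_of_mem hz1s
    have i2 : infDist z0 (segment ℝ a b) ≤ dist z0 (P i 0) :=
      infDist_le_dist_of_mem (hPs2 i hi)
    have := hεsle z0 hz0Δ
    linarith
  -- run Sperner
  obtain ⟨i, j, hcase⟩ := sperner2D n hn0 (fun i j => colF (i, j)) h0' h1' h2'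
  have hfinal : ∀ (z q r : ℕ × ℕ), z.1 + z.2 ≤ n →
      colF z ≠ colF q → colF q ≠ colF r → colF z ≠ colF r →
      dist (P z.1 z.2) (P q.1 q.2) ≤ (‖b - a‖ + ‖c - a‖) / n →
      dist (P z.1 z.2) (P r.1 r.2) ≤ (‖b - a‖ + ‖c - a‖) / n →
      P q.1 q.2 ∈ DD (ixf q) → P r.1 r.2 ∈ DD (ixf r) → False := by
    intro z q r hzv hzq hqr hzr hdq hdr hmq hmr
    have hx12 : ixf z ≠ ixf q := fun he => hzq (hcoldet _ _ he)
    have hx23 : ixf q ≠ ixf r := fun he => hqr (hcoldet _ _ he)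
    have hx13 : ixf z ≠ ixf r := fun he => hzr (hcoldet _ _ he)
    have hzΔ := hPmem z.1 z.2 hzv
    have hzD : P z.1 z.2 ∈ DD (ixf z) := hixf z hzv
    have e1 : infDist (P z.1 z.2) (DD (ixf z)) = 0 := infDist_zero_of_mem hzD
    have e2 : infDist (P z.1 z.2) (DD (ixf q)) ≤ (‖b - a‖ + ‖c - a‖) / n :=
      le_trans (infDist_le_dist_of_mem hmq) hdq
    have e3 : infDist (P z.1 z.2) (DD (ixf r)) ≤ (‖b - a‖ + ‖c - a‖) / n :=
      le_trans (infDist_le_dist_of_mem hmr) hdr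
    have hlow : δ ≤ infDist (P z.1 z.2) (DD (ixf z)) + infDist (P z.1 z.2) (DD (ixf q))
        + infDist (P z.1 z.2) (DD (ixf r)) :=
      le_trans (hδle (ixf z, ixf q, ixf r))
        ((hδf (ixf z, ixf q, ixf r)).2 hx12 hx23 hx13 _ hzΔ)
    have hmm : 2 * ((‖b - a‖ + ‖c - a‖) / n) < δ := by
      rw [show 2 * ((‖b - a‖ + ‖c - a‖) / (n:ℝ)) = (2 * (‖b - a‖ + ‖c - a‖)) / n by ring,
        div_lt_iff₀ hnR]
      exact hmesh2
    linarith
  rcases hcase with ⟨hg, d12, d13, d23⟩ | ⟨hg, d12, d13, d23⟩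
  · exact hfinal (i, j) (i+1, j) (i, j+1) (by omega : i + j ≤ n) d12 d23 d13
      (by rw [dist_comm]; exact hPd1 i j) (by rw [dist_comm]; exact hPd2 i j)
      (hixf (i+1, j) (by omega : (i+1) + j ≤ n)) (hixf (i, j+1) (by omega : i + (j+1) ≤ n))
  · exact hfinal (i+1, j+1) (i+1, j) (i, j+1) (by omega : (i+1) + (j+1) ≤ n) d12 d23 d13
      (hPd2 (i+1) j) (hPd1 i (j+1))
      (hixf (i+1, j) (by omega : (i+1) + j ≤ n)) (hixf (i, j+1) (by omega : i + (j+1) ≤ n))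

theorem stmt14 (a b c : ℝ × ℝ) (h : AffineIndependent ℝ ![a, b, c]) :
    IsEmpty (Hexacarpet ≃ₜ (convexHull ℝ {a, b, c} : Set (ℝ × ℝ))) := by
  refine ⟨fun h0 => ?_⟩
  have hpi : Continuous piK := continuous_quot_mk
  have hGc : Continuous (fun u => ((h0 (piK u) : (convexHull ℝ {a, b, c} : Set (ℝ × ℝ)))
      : ℝ × ℝ)) := continuous_subtype_val.comp (h0.continuous.comp hpi)
  apply master a b c h _ hGc
  · intro u
    exact (h0 (piK u)).2
  · intro y hy
    obtain ⟨k, hk⟩ := h0.surjective ⟨y, hy⟩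
    obtain ⟨u, hu⟩ := Quotient.exists_rep k
    refine ⟨u, ?_⟩
    show ((h0 (piK u) : _) : ℝ × ℝ) = y
    have : piK u = k := hu
    rw [this, hk]
  · intro u v w h1 h2 h3 e1 e2
    have p1 : piK u = piK v := h0.injective (Subtype.ext e1)
    have p2 : piK v = piK w := h0.injective (Subtype.ext e2)
    exact no_three p1 p2 h1 h2 h3
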